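/- With λ, Δ, S, C, a, b as defined, the point mass at delay Δ satisfies its steady-state equation: b = (1/2)·( 1/2 − ( a + b·exp(−λΔ) + ∫_0^Δ C·exp(λτ/2)·exp(−λτ) dτ ) ). (This is the relation ĝ(Δ_d) = ½(½ − I) with I = ∫_0^∞ e^{−λτ} g(τ) dτ from the proof of Proposition 1, written out for g = g̃ + a·δ_0 + b·δ_Δ.) -/

import Mathlib

open Real Set MeasureTheory intervalIntegral

/-- Steady-state equation for the point mass `b = ĝ(Δ)` at delay `Δ`
(Proposition 1 of the paper): `ĝ(Δ) = ½(½ − I)` with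
`I = ∫₀^∞ e^{−λτ} g(τ) dτ`, written out for `g = g̃ + a·δ₀ + b·δ_Δ`. -/
theorem point_mass_delta_eq
    (lam Δ S C a b : ℝ) (hlam : 0 < lam) (hΔ : 0 < Δ)
    (hS : S = Real.exp (lam * Δ / 2) + Real.exp (-(lam * Δ) / 2) - 1)
    (hC : C = lam * (1 + Real.exp (-(lam * Δ))) / (8 * S))
    (ha : a = 2 * C / lam)
    (hb : b = 1 / 2 - (2 * Real.exp (lam * Δ / 2) / lam) * C) :
    b = (1 / 2) * (1 / 2 -
        (a + b * Real.exp (-(lam * Δ)) +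
          ∫ τ in (0 : ℝ)..Δ, C * Real.exp (lam * τ / 2) * Real.exp (-(lam * τ)))) := by
  have hlam' : lam ≠ 0 := ne_of_gt hlam
  -- compute the integral
  have hint : (∫ τ in (0 : ℝ)..Δ, C * Real.exp (lam * τ / 2) * Real.exp (-(lam * τ)))
      = C * ((Real.exp (-(lam / 2) * Δ) - 1) / (-(lam / 2))) := by
    have h1 : ∀ τ : ℝ, C * Real.exp (lam * τ / 2) * Real.exp (-(lam * τ))
        = C * Real.exp (-(lam / 2) * τ) := by
      intro τ
      rw [mul_assoc, ← Real.exp_add]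
      ring_nf
    simp only [h1]
    rw [intervalIntegral.integral_const_mul]
    have hc : -(lam / 2) ≠ 0 := by simpa using hlam'
    rw [intervalIntegral.integral_comp_mul_left Real.exp hc]
    simp [Real.exp_zero, smul_eq_mul]
    ring
  rw [hint]
  -- abbreviate the exponential
  set E := Real.exp (lam * Δ / 2) with hE
  have hEpos : 0 < E := Real.exp_pos _
  have hEne : E ≠ 0 := ne_of_gt hEpos
  have h3 : Real.exp (-(lam * Δ) / 2) = E⁻¹ := by
    rw [hE, ← Real.exp_neg]; ring_nf
  have h4 : Real.exp (-(lam * Δ)) = (E⁻¹) ^ 2 := by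
    rw [hE, ← Real.exp_neg, ← Real.exp_nat_mul]; ring_nf
  have h5 : Real.exp (-(lam / 2) * Δ) = E⁻¹ := by
    rw [hE, ← Real.exp_neg]; ring_nf
  rw [h3] at hS
  rw [h4, h5]
  -- S is positive
  have hSpos : 0 < S := by
    rw [hS]
    have h6 : 2 ≤ E + E⁻¹ := by
      nlinarith [sq_nonneg (E - 1), inv_pos.mpr hEpos, mul_inv_cancel₀ hEne]
    linarith
  have hSne : S ≠ 0 := ne_of_gt hSpos
  rw [h4] at hC
  have hE2 : E⁻¹ * E = 1 := inv_mul_cancel₀ hEne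
  have h8S : (8 : ℝ) * S ≠ 0 := by positivity
  have hC8 : C * (8 * S) = lam * (1 + E⁻¹ ^ 2) := by
    rw [hC, div_mul_cancel₀ _ h8S]
  have hSE : S * E = E ^ 2 - E + 1 := by
    rw [hS]; linear_combination hE2
  have hkey : 8 * C * E * (E ^ 2 - E + 1) = lam * (E ^ 2 + 1) := by
    linear_combination E ^ 2 * hC8 - 8 * C * E * hSE + lam * (E⁻¹ * E + 1) * hE2
  subst ha hb
  field_simp
  linear_combination (-1) * hkey
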